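/- Let T be irreducible and aperiodic with unique stationary distribution π̃ ∈ ℝ^K, and let π be the unique stationary distribution of the PCA global transition matrix P on [K]^N. Then for each node n, the n-th marginal of π equals π̃: Σ_{x : x_n = k} π(x) = π̃(k) for all k ∈ [K]. -/

import Mathlib

open Matrix Finset MeasureTheory

/-- A row-stochastic matrix: nonnegative entries, each row sums to 1. -/
def RowStochastic {S : Type*} [Fintype S] (T : Matrix S S ℝ) : Prop :=
  (∀ j k, 0 ≤ T j k) ∧ ∀ j, ∑ k, T j k = 1

/-- Irreducibility of a nonnegative matrix: every state reaches every state. -/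
def MatIrreducible {S : Type*} [Fintype S] [DecidableEq S] (T : Matrix S S ℝ) : Prop :=
  ∀ i j, ∃ t : ℕ, 0 < (T ^ t) i j

/-- `d` is the period of state `i`: the gcd of the set of positive return times. -/
def IsGcdPeriod {S : Type*} [Fintype S] [DecidableEq S] (T : Matrix S S ℝ) (i : S) (d : ℕ) : Prop :=
  (∀ m : ℕ, 0 < m → 0 < (T ^ m) i i → d ∣ m) ∧
    ∀ e : ℕ, (∀ m : ℕ, 0 < m → 0 < (T ^ m) i i → e ∣ m) → e ∣ d

/-- The neighborhood of node `n` on the `N`-cycle: all nodes within cyclic distance `nv`. -/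
def nbhd (N nv : ℕ) (n : Fin N) : Finset (Fin N) :=
  Finset.univ.filter fun i => (n.val + N - i.val) % N ≤ nv ∨ (i.val + N - n.val) % N ≤ nv

/-- The PCA global transition matrix on configurations. -/
noncomputable def pcaP (N K nv : ℕ) (T : Matrix (Fin K) (Fin K) ℝ) :
    Matrix (Fin N → Fin K) (Fin N → Fin K) ℝ :=
  Matrix.of fun x y =>
    ∏ n : Fin N, (((nbhd N nv n).card : ℝ)⁻¹ * ∑ i ∈ nbhd N nv n, T (x i) (y n))

/-- Cyclic class decomposition of `[K]` for `T` with period `d`. -/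
def CyclicClasses {K : ℕ} (T : Matrix (Fin K) (Fin K) ℝ) (d : ℕ)
    (C : ℕ → Finset (Fin K)) : Prop :=
  (∀ r, C (r + d) = C r) ∧ (∀ k : Fin K, ∃! r : ℕ, r < d ∧ k ∈ C r) ∧
    ∀ j k, 0 < T j k → ∃ r, j ∈ C r ∧ k ∈ C (r + 1)

/-! ### Auxiliary lemmas -/

lemma aux_mul_mem {S : AddSubmonoid ℕ} (u : ℕ) {z : ℕ} (hz : z ∈ S) : u * z ∈ S := by
  simpa [smul_eq_mul] using S.nsmul_mem hz u

/-- In the additive closure of a finset of naturals there are two elements differing by the gcd. -/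
lemma aux_consec (F : Finset ℕ) (hne : F.Nonempty) :
    ∃ c d : ℕ, c ∈ AddSubmonoid.closure (F : Set ℕ) ∧ d ∈ AddSubmonoid.closure (F : Set ℕ) ∧
      d = c + F.gcd id := by
  induction hne using Finset.Nonempty.cons_induction with
  | singleton a =>
      exact ⟨0, a, zero_mem _, AddSubmonoid.subset_closure (by simp), by simp⟩
  | cons a F ha hne ih =>
      obtain ⟨c, d, hc, hd, hcd⟩ := ih
      have hsub : AddSubmonoid.closure (F : Set ℕ) ≤
          AddSubmonoid.closure ((Finset.cons a F ha : Finset ℕ) : Set ℕ) := by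
        apply AddSubmonoid.closure_mono
        intro x hx
        simp only [Finset.coe_cons, Set.mem_insert_iff]
        exact Or.inr hx
      have hc' := hsub hc
      have hd' := hsub hd
      have hamem : a ∈ AddSubmonoid.closure ((Finset.cons a F ha : Finset ℕ) : Set ℕ) :=
        AddSubmonoid.subset_closure (by simp)
      set g' : ℕ := F.gcd id with hg'
      have hgcd : (Finset.cons a F ha).gcd id = Nat.gcd a g' := by
        rw [Finset.cons_eq_insert, Finset.gcd_insert]; rfl
      rw [hgcd]
      rcases Nat.eq_zero_or_pos g' with hg'0 | hg'pos
      · exact ⟨0, a, zero_mem _, hamem, by simp [hg'0]⟩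
      set g : ℕ := Nat.gcd a g' with hg
      have hbez : (g : ℤ) = a * Nat.gcdA a g' + g' * Nat.gcdB a g' := Nat.gcd_eq_gcd_ab a g'
      set x : ℤ := Nat.gcdA a g' with hxdef
      set y : ℤ := Nat.gcdB a g' with hydef
      set t : ℕ := x.natAbs + 1 with ht
      set x' : ℤ := x + t * g' with hx'
      set y' : ℤ := y - t * a with hy'
      have hbez2 : (g : ℤ) = a * x' + g' * y' := by rw [hx', hy']; ring_nf; ring_nf at hbez; linarith [hbez]
      have hx'0 : 0 ≤ x' := by
        have h1 : -x ≤ (x.natAbs : ℤ) := by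
          rw [← Int.abs_eq_natAbs]; exact neg_le_abs x
        have h2 : (1:ℤ) ≤ g' := by exact_mod_cast hg'pos
        have h3 : (t:ℤ) * g' ≥ (t:ℤ) := le_mul_of_one_le_right (by positivity) h2
        have h4 : (t:ℤ) = x.natAbs + 1 := by exact_mod_cast rfl
        linarith
      set p : ℕ := y'.toNat with hp
      set q : ℕ := (-y').toNat with hq
      have hpq : (p : ℤ) - q = y' := by
        rcases le_or_gt 0 y' with h | h
        · rw [hp, hq, Int.toNat_of_nonneg h, Int.toNat_of_nonpos (by linarith)]; ring
        · rw [hp, hq, Int.toNat_of_nonpos (le_of_lt h), Int.toNat_of_nonneg (by linarith)]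
          push_cast; ring
      set X : ℕ := x'.toNat with hX
      have hXx : (X : ℤ) = x' := Int.toNat_of_nonneg hx'0
      refine ⟨q * d + p * c, X * a + p * d + q * c, ?_, ?_, ?_⟩
      · exact add_mem (aux_mul_mem q hd') (aux_mul_mem p hc')
      · exact add_mem (add_mem (aux_mul_mem X hamem) (aux_mul_mem p hd')) (aux_mul_mem q hc')
      · have hdz : (d : ℤ) = c + g' := by exact_mod_cast hcd
        have : (X * a + p * d + q * c : ℤ) = (q * d + p * c + g : ℤ) := by
          rw [hXx, hdz]
          linear_combination (g' : ℤ) * hpq - hbez2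
        exact_mod_cast this

/-- A numerical-semigroup cofiniteness lemma. -/

lemma aux_cofinite (S : AddSubmonoid ℕ) (m : ℕ) (hm : m ∈ S) (hm1 : m + 1 ∈ S) (hmpos : 0 < m) :
    ∀ n, m * m ≤ n → n ∈ S := by
  intro n hn
  set q := n / m with hqdef
  set r := n % m with hrdef
  have hr : r < m := Nat.mod_lt _ hmpos
  have hq : m ≤ q := Nat.le_div_iff_mul_le hmpos |>.mpr (by nlinarith)
  have hdm : m * q + r = n := Nat.div_add_mod n m
  have hrepr : n = (q - r) * m + r * (m + 1) := by
    have : r ≤ q := le_of_lt (lt_of_lt_of_le hr hq)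
    zify [this]
    push_cast [← hdm]
    ring
  rw [hrepr]
  exact add_mem (aux_mul_mem _ hm) (aux_mul_mem _ hm1)

lemma aux_pow_nonneg {K : ℕ} (T : Matrix (Fin K) (Fin K) ℝ) (h : ∀ j k, 0 ≤ T j k) (t : ℕ) :
    ∀ j k, 0 ≤ (T ^ t) j k := by
  induction t with
  | zero => intro j k; by_cases hjk : j = k <;> simp [pow_zero, Matrix.one_apply, hjk]
  | succ t ih =>
      intro j k
      rw [pow_succ, Matrix.mul_apply]
      exact Finset.sum_nonneg fun m _ => mul_nonneg (ih j m) (h m k)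

lemma aux_pow_add_le {K : ℕ} (T : Matrix (Fin K) (Fin K) ℝ) (h : ∀ j k, 0 ≤ T j k)
    (a b : ℕ) (i m j : Fin K) : (T ^ a) i m * (T ^ b) m j ≤ (T ^ (a + b)) i j := by
  rw [pow_add, Matrix.mul_apply]
  exact Finset.single_le_sum
    (fun l _ => mul_nonneg (aux_pow_nonneg T h a i l) (aux_pow_nonneg T h b l j))
    (Finset.mem_univ m)

lemma aux_exists_all_pos {K : ℕ} (T : Matrix (Fin K) (Fin K) ℝ)
    (hnn : ∀ j k, 0 ≤ T j k)
    (hirr : ∀ i j : Fin K, ∃ t : ℕ, 0 < (T ^ t) i j)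
    (haper : ∀ i : Fin K, ∀ e : ℕ, (∀ m : ℕ, 0 < m → 0 < (T ^ m) i i → e ∣ m) → e ∣ 1) :
    ∃ t : ℕ, ∀ i j, 0 < (T ^ t) i j := by
  have hdiag : ∀ i : Fin K, ∃ Ni : ℕ, ∀ m, Ni ≤ m → 0 < (T ^ m) i i := by
    intro i
    set Si : Set ℕ := {m | 0 < m ∧ 0 < (T ^ m) i i} with hSi
    have hadd : ∀ {u v : ℕ}, u ∈ Si → v ∈ Si → u + v ∈ Si := by
      intro u v hu hv
      exact ⟨Nat.add_pos_left hu.1 v, lt_of_lt_of_le (mul_pos hu.2 hv.2) (aux_pow_add_le T hnn u v i i i)⟩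
    have hSne : ∃ s, s ∈ Si := by
      by_contra hcon
      push_neg at hcon
      have h2 : (2:ℕ) ∣ 1 := haper i 2 (fun m hm hp => absurd (⟨hm, hp⟩ : m ∈ Si) (hcon m))
      omega
    obtain ⟨s0, hs0⟩ := hSne
    set W : Set ℕ := {g | ∃ F : Finset ℕ, (∀ f ∈ F, f ∈ Si) ∧ F.Nonempty ∧ F.gcd id = g} with hW
    have hWne : W.Nonempty := ⟨s0, {s0}, by simpa using hs0, Finset.singleton_nonempty _, by simp⟩
    set dmin := sInf W with hdmin
    have hdWmem : dmin ∈ W := Nat.sInf_mem hWne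
    obtain ⟨F, hFS, hFne, hFgcd⟩ := hdWmem
    have hdpos : 0 < dmin := by
      obtain ⟨f, hf⟩ := hFne
      have hdvd : dmin ∣ f := by
        have := Finset.gcd_dvd (f := (id : ℕ → ℕ)) hf
        rw [hFgcd] at this
        exact this
      exact Nat.pos_of_dvd_of_pos hdvd (hFS f hf).1
    have hddvd : ∀ s ∈ Si, dmin ∣ s := by
      intro s hs
      by_contra hns
      have hmem : Nat.gcd s dmin ∈ W := by
        refine ⟨insert s F, ?_, Finset.insert_nonempty _ _, ?_⟩
        · intro f hf
          rcases Finset.mem_insert.mp hf with h | h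
          · exact h ▸ hs
          · exact hFS f h
        · rw [Finset.gcd_insert, hFgcd]; rfl
      have hlt : Nat.gcd s dmin < dmin := by
        have h1 : Nat.gcd s dmin ∣ dmin := Nat.gcd_dvd_right _ _
        have h2 : Nat.gcd s dmin ≠ dmin := fun h => hns (h ▸ Nat.gcd_dvd_left s dmin)
        exact lt_of_le_of_ne (Nat.le_of_dvd hdpos h1) h2
      exact absurd (Nat.sInf_le hmem) (by omega)
    have hd1 : dmin = 1 :=
      Nat.dvd_one.mp (haper i dmin (fun m hm hp => hddvd m ⟨hm, hp⟩))
    rw [hd1] at hFgcd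
    obtain ⟨c, d, hc, hd, hcd⟩ := aux_consec F hFne
    rw [hFgcd] at hcd
    have hmmem : 2 * c + 1 ∈ AddSubmonoid.closure (F : Set ℕ) := by
      have : 2 * c + 1 = c + d := by omega
      rw [this]; exact add_mem hc hd
    have hm1mem : 2 * c + 1 + 1 ∈ AddSubmonoid.closure (F : Set ℕ) := by
      have : 2 * c + 1 + 1 = d + d := by omega
      rw [this]; exact add_mem hd hd
    have hcof := aux_cofinite _ _ hmmem hm1mem (Nat.succ_pos _)
    have htrans : ∀ z : ℕ, z ∈ AddSubmonoid.closure (F : Set ℕ) → z = 0 ∨ z ∈ Si := by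
      intro z hz
      refine AddSubmonoid.closure_induction (motive := fun x _ => x = 0 ∨ x ∈ Si)
        (fun x hx => Or.inr (hFS x hx)) (Or.inl rfl)
        (fun x y hx hy ihx ihy => ?_) hz
      rcases ihx with h | h
      · rw [h, zero_add]; exact ihy
      rcases ihy with h' | h'
      · rw [h', add_zero]; exact Or.inr h
      · exact Or.inr (hadd h h')
    refine ⟨(2 * c + 1) * (2 * c + 1), fun m hm => ?_⟩
    have hmem := hcof m hm
    rcases htrans m hmem with h | h
    · exfalso
      have h1 : 0 < (2 * c + 1) * (2 * c + 1) := Nat.mul_pos (Nat.succ_pos _) (Nat.succ_pos _)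
      omega
    · exact h.2
  choose Nf hNf using hdiag
  choose s hs using hirr
  set B := Finset.univ.sup Nf with hB
  set Smax := Finset.univ.sup (fun i => Finset.univ.sup (s i)) with hSmax
  refine ⟨B + Smax, fun i j => ?_⟩
  have h1 : s i j ≤ Smax := le_trans (Finset.le_sup (Finset.mem_univ j))
    (Finset.le_sup (f := fun i => Finset.univ.sup (s i)) (Finset.mem_univ i))
  have h2 : Nf i ≤ B := Finset.le_sup (Finset.mem_univ i)
  have hdp : 0 < (T ^ (B + Smax - s i j)) i i := hNf i _ (by omega)
  have hle := aux_pow_add_le T hnn (B + Smax - s i j) (s i j) i i j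
  have heq : B + Smax - s i j + s i j = B + Smax := by omega
  rw [heq] at hle
  exact lt_of_lt_of_le (mul_pos hdp (hs i j)) hle

/-- Powers of a row-stochastic matrix are row-stochastic. -/
lemma aux_rowstoch_pow {n : ℕ} (A : Matrix (Fin n) (Fin n) ℝ)
    (h1 : ∀ i j, 0 ≤ A i j) (h2 : ∀ i, ∑ j, A i j = 1) (t : ℕ) :
    (∀ i j, 0 ≤ (A ^ t) i j) ∧ ∀ i, ∑ j, (A ^ t) i j = 1 := by
  induction t with
  | zero =>
      constructor
      · intro i j; by_cases hij : i = j <;> simp [Matrix.one_apply, hij]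
      · intro i; simp [Matrix.one_apply]
  | succ t ih =>
      constructor
      · intro i j
        rw [pow_succ, Matrix.mul_apply]
        exact Finset.sum_nonneg fun m _ => mul_nonneg (ih.1 i m) (h1 m j)
      · intro i
        rw [pow_succ]
        simp_rw [Matrix.mul_apply]
        rw [Finset.sum_comm]
        calc ∑ m, ∑ j, (A ^ t) i m * A m j = ∑ m, (A ^ t) i m * ∑ j, A m j := by
              simp_rw [Finset.mul_sum]
          _ = ∑ m, (A ^ t) i m := by simp_rw [h2, mul_one]
          _ = 1 := ih.2 i

/-- Doeblin contraction. -/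
lemma aux_doeblin {K : ℕ} (P : Matrix (Fin K) (Fin K) ℝ) (δ : ℝ)
    (hδ : ∀ j k, δ ≤ P j k) (hrow : ∀ j, ∑ k, P j k = 1) (u : Fin K → ℝ)
    (hu : ∑ j, u j = 0) :
    ∑ k, |∑ j, u j * P j k| ≤ (1 - K * δ) * ∑ j, |u j| := by
  have key : ∀ k, |∑ j, u j * P j k| ≤ ∑ j, |u j| * (P j k - δ) := by
    intro k
    have h1 : ∑ j, u j * P j k = ∑ j, u j * (P j k - δ) := by
      simp only [mul_sub]
      rw [Finset.sum_sub_distrib, ← Finset.sum_mul, hu, zero_mul, sub_zero]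
    rw [h1]
    calc |∑ j, u j * (P j k - δ)| ≤ ∑ j, |u j * (P j k - δ)| := Finset.abs_sum_le_sum_abs _ _
      _ = ∑ j, |u j| * (P j k - δ) := by
          apply Finset.sum_congr rfl
          intro j _
          rw [abs_mul, abs_of_nonneg (sub_nonneg.mpr (hδ j k))]
  calc ∑ k, |∑ j, u j * P j k| ≤ ∑ k, ∑ j, |u j| * (P j k - δ) :=
        Finset.sum_le_sum fun k _ => key k
    _ = ∑ j, |u j| * ∑ k, (P j k - δ) := by
        rw [Finset.sum_comm]
        exact Finset.sum_congr rfl fun j _ => (Finset.mul_sum _ _ _).symm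
    _ = ∑ j, |u j| * (1 - K * δ) := by
        apply Finset.sum_congr rfl
        intro j _
        rw [Finset.sum_sub_distrib, hrow, Finset.sum_const, Finset.card_univ,
          Fintype.card_fin, nsmul_eq_mul]
    _ = (1 - K * δ) * ∑ j, |u j| := by rw [← Finset.sum_mul, mul_comm]

theorem stmt_11 {K N nv : ℕ} (T : Matrix (Fin K) (Fin K) ℝ) (hT : RowStochastic T)
    (hirr : MatIrreducible T) (haper : ∀ i, IsGcdPeriod T i 1)
    (πt : Fin K → ℝ)
    (hπt : (∀ k, 0 ≤ πt k) ∧ (∑ k, πt k = 1) ∧ ∀ k, ∑ j, πt j * T j k = πt k)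
    (π : (Fin N → Fin K) → ℝ)
    (hπ : (∀ x, 0 ≤ π x) ∧ (∑ x, π x = 1) ∧ ∀ y, ∑ x, π x * pcaP N K nv T x y = π y) :
    ∀ (n : Fin N) (k : Fin K),
      ∑ x ∈ Finset.univ.filter (fun x : Fin N → Fin K => x n = k), π x = πt k := by
  classical
  obtain ⟨hTnn, hTrow⟩ := hT
  obtain ⟨hπtnn, hπt1, hπtstat⟩ := hπt
  obtain ⟨hπnn, hπ1, hπstat⟩ := hπ
  intro n k
  -- marginals
  set μ : Fin N → Fin K → ℝ :=
    fun i j => ∑ x ∈ Finset.univ.filter (fun x : Fin N → Fin K => x i = j), π x with hμdef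
  show μ n k = πt k
  have hμsum : ∀ i, ∑ j, μ i j = 1 := by
    intro i
    rw [hμdef]
    rw [Finset.sum_fiberwise Finset.univ (fun x : Fin N → Fin K => x i) π]
    exact hπ1
  -- neighborhood facts
  have hself : ∀ m : Fin N, m ∈ nbhd N nv m := by
    intro m
    simp only [nbhd, Finset.mem_filter, Finset.mem_univ, true_and]
    left
    have h1 : m.val + N - m.val = N := by omega
    rw [h1, Nat.mod_self]
    exact Nat.zero_le _
  have hcne : ∀ m : Fin N, ((nbhd N nv m).card : ℝ) ≠ 0 := by
    intro m
    have : 0 < (nbhd N nv m).card := Finset.card_pos.mpr ⟨m, hself m⟩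
    positivity
  -- Claim A: summing pcaP over configurations with fixed coordinate n' = k'
  have hA : ∀ (x : Fin N → Fin K) (n' : Fin N) (k' : Fin K),
      ∑ y ∈ Finset.univ.filter (fun y : Fin N → Fin K => y n' = k'), pcaP N K nv T x y
        = ((nbhd N nv n').card : ℝ)⁻¹ * ∑ i ∈ nbhd N nv n', T (x i) k' := by
    intro x n' k'
    set f : Fin N → Fin K → ℝ :=
      fun m v => ((nbhd N nv m).card : ℝ)⁻¹ * ∑ i ∈ nbhd N nv m, T (x i) v with hfdef
    set g : Fin N → Fin K → ℝ :=
      fun m v => if m = n' then (if v = k' then f m v else 0) else f m v with hgdef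
    have hstep1 : ∀ y : Fin N → Fin K,
        (if y n' = k' then ∏ m, f m (y m) else 0) = ∏ m, g m (y m) := by
      intro y
      by_cases h : y n' = k'
      · rw [if_pos h]
        apply Finset.prod_congr rfl
        intro m _
        by_cases hm : m = n'
        · subst hm; simp [hgdef, h]
        · simp [hgdef, hm]
      · rw [if_neg h]
        symm
        apply Finset.prod_eq_zero (Finset.mem_univ n')
        simp [hgdef, h]
    have hfsum : ∀ m, m ≠ n' → ∑ v, g m v = 1 := by
      intro m hmn
      have h0 : ∑ v, g m v = ∑ v, f m v := by
        apply Finset.sum_congr rfl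
        intro v _
        simp [hgdef, hmn]
      rw [h0, hfdef]
      calc ∑ v, ((nbhd N nv m).card : ℝ)⁻¹ * ∑ i ∈ nbhd N nv m, T (x i) v
          = ((nbhd N nv m).card : ℝ)⁻¹ * ∑ i ∈ nbhd N nv m, ∑ v, T (x i) v := by
            rw [← Finset.mul_sum, Finset.sum_comm]
        _ = ((nbhd N nv m).card : ℝ)⁻¹ * ∑ i ∈ nbhd N nv m, (1:ℝ) := by
            simp_rw [hTrow]
        _ = 1 := by
            rw [Finset.sum_const, nsmul_eq_mul, mul_one, inv_mul_cancel₀ (hcne m)]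
    calc ∑ y ∈ Finset.univ.filter (fun y : Fin N → Fin K => y n' = k'), pcaP N K nv T x y
        = ∑ y : Fin N → Fin K, if y n' = k' then ∏ m, f m (y m) else 0 := by
          rw [Finset.sum_filter]
          rfl
      _ = ∑ y : Fin N → Fin K, ∏ m, g m (y m) := Finset.sum_congr rfl fun y _ => hstep1 y
      _ = ∏ m, ∑ v, g m v := (Fintype.prod_sum g).symm
      _ = (∑ v, g n' v) * ∏ m ∈ Finset.univ.erase n', ∑ v, g m v := by
          exact (Finset.mul_prod_erase Finset.univ (fun m => ∑ v, g m v)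
            (Finset.mem_univ n')).symm
      _ = (∑ v, g n' v) * 1 := by
          rw [Finset.prod_congr rfl (fun m hm => hfsum m (Finset.mem_erase.mp hm).1),
            Finset.prod_const_one]
      _ = f n' k' := by
          rw [mul_one, hgdef]
          simp
  -- the marginal recursion
  have hrec : ∀ (n' : Fin N) (k' : Fin K),
      μ n' k' = ∑ i ∈ nbhd N nv n',
        ((nbhd N nv n').card : ℝ)⁻¹ * ∑ j, μ i j * T j k' := by
    intro n' k'
    have e1 : μ n' k' = ∑ y ∈ Finset.univ.filter (fun y : Fin N → Fin K => y n' = k'),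
        ∑ x, π x * pcaP N K nv T x y :=
      Finset.sum_congr rfl fun y _ => (hπstat y).symm
    have e2 : ∀ i : Fin N, ∑ x, π x * T (x i) k' = ∑ j, μ i j * T j k' := by
      intro i
      rw [← Finset.sum_fiberwise Finset.univ (fun x : Fin N → Fin K => x i)
        (fun x => π x * T (x i) k')]
      apply Finset.sum_congr rfl
      intro j _
      calc ∑ x ∈ Finset.univ.filter (fun x : Fin N → Fin K => x i = j), π x * T (x i) k'
          = ∑ x ∈ Finset.univ.filter (fun x : Fin N → Fin K => x i = j), π x * T j k' := by
            apply Finset.sum_congr rfl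
            intro x hx
            rw [(Finset.mem_filter.mp hx).2]
        _ = μ i j * T j k' := by rw [← Finset.sum_mul]
    rw [e1, Finset.sum_comm]
    calc ∑ x, ∑ y ∈ Finset.univ.filter (fun y : Fin N → Fin K => y n' = k'),
          π x * pcaP N K nv T x y
        = ∑ x, π x * (((nbhd N nv n').card : ℝ)⁻¹ * ∑ i ∈ nbhd N nv n', T (x i) k') := by
          apply Finset.sum_congr rfl
          intro x _
          rw [← Finset.mul_sum, hA x n' k']
      _ = ∑ x, ∑ i ∈ nbhd N nv n', ((nbhd N nv n').card : ℝ)⁻¹ * (π x * T (x i) k') := by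
          apply Finset.sum_congr rfl
          intro x _
          rw [Finset.mul_sum, Finset.mul_sum]
          apply Finset.sum_congr rfl
          intro i _
          ring
      _ = ∑ i ∈ nbhd N nv n', ((nbhd N nv n').card : ℝ)⁻¹ * ∑ x, π x * T (x i) k' := by
          rw [Finset.sum_comm]
          exact Finset.sum_congr rfl fun i _ => (Finset.mul_sum _ _ _).symm
      _ = ∑ i ∈ nbhd N nv n', ((nbhd N nv n').card : ℝ)⁻¹ * ∑ j, μ i j * T j k' := by
          exact Finset.sum_congr rfl fun i _ => by rw [e2 i]
  -- matrix formulation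
  set A : Matrix (Fin N) (Fin N) ℝ :=
    Matrix.of (fun n' i => if i ∈ nbhd N nv n' then ((nbhd N nv n').card : ℝ)⁻¹ else 0)
    with hAdef
  set M : Matrix (Fin N) (Fin K) ℝ := Matrix.of μ with hMdef
  have hAnn : ∀ n' i, 0 ≤ A n' i := by
    intro n' i
    rw [hAdef]
    simp only [Matrix.of_apply]
    split
    · exact inv_nonneg.mpr (Nat.cast_nonneg _)
    · exact le_rfl
  have hArow : ∀ n', ∑ i, A n' i = 1 := by
    intro n'
    rw [hAdef]
    simp only [Matrix.of_apply]
    rw [Finset.sum_ite_mem, Finset.univ_inter, Finset.sum_const, nsmul_eq_mul,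
      mul_inv_cancel₀ (hcne n')]
  have hMrec : M = A * (M * T) := by
    ext n' k'
    rw [Matrix.mul_apply]
    simp_rw [Matrix.mul_apply]
    show μ n' k' = ∑ i, A n' i * ∑ j, μ i j * T j k'
    rw [hrec n' k', hAdef]
    simp only [Matrix.of_apply]
    symm
    calc ∑ i : Fin N, (if i ∈ nbhd N nv n' then ((nbhd N nv n').card : ℝ)⁻¹ else 0) *
          ∑ j, μ i j * T j k'
        = ∑ i : Fin N, (if i ∈ nbhd N nv n' then ((nbhd N nv n').card : ℝ)⁻¹ *
            ∑ j, μ i j * T j k' else 0) := by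
          simp_rw [ite_mul, zero_mul]
      _ = ∑ i ∈ nbhd N nv n', ((nbhd N nv n').card : ℝ)⁻¹ * ∑ j, μ i j * T j k' := by
          rw [Finset.sum_ite_mem, Finset.univ_inter]
  have hiter : ∀ t, M = A ^ t * (M * T ^ t) := by
    intro t
    induction t with
    | zero => simp
    | succ t ih =>
        calc M = A ^ t * (M * T ^ t) := ih
          _ = A ^ t * (A * (M * T) * T ^ t) := by rw [← hMrec]
          _ = A ^ (t + 1) * (M * T ^ (t + 1)) := by
              rw [pow_succ, pow_succ']
              simp only [Matrix.mul_assoc]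
  -- stationarity of πt under powers of T
  have hstatT : ∀ t (k' : Fin K), ∑ j, πt j * (T ^ t) j k' = πt k' := by
    intro t
    induction t with
    | zero => intro k'; simp [Matrix.one_apply]
    | succ t ih =>
        intro k'
        rw [pow_succ]
        simp_rw [Matrix.mul_apply, Finset.mul_sum]
        rw [Finset.sum_comm]
        calc ∑ m, ∑ j, πt j * ((T ^ t) j m * T m k')
            = ∑ m, (∑ j, πt j * (T ^ t) j m) * T m k' := by
              apply Finset.sum_congr rfl
              intro m _
              rw [Finset.sum_mul]
              exact Finset.sum_congr rfl fun j _ => by ring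
          _ = ∑ m, πt m * T m k' := by simp_rw [ih]
          _ = πt k' := hπtstat k'
  -- positivity time
  have hK : 0 < K := k.pos
  obtain ⟨t0, ht0⟩ := aux_exists_all_pos T hTnn hirr (fun i => (haper i).2)
  set P : Matrix (Fin K) (Fin K) ℝ := T ^ t0 with hPdef
  have hProw : ∀ j, ∑ l, P j l = 1 := (aux_rowstoch_pow T hTnn hTrow t0).2
  have hne : (Finset.univ : Finset (Fin K × Fin K)).Nonempty := ⟨(k, k), Finset.mem_univ _⟩
  set δ : ℝ := Finset.univ.inf' hne (fun p : Fin K × Fin K => P p.1 p.2) with hδdef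
  have hδpos : 0 < δ := (Finset.lt_inf'_iff hne).mpr fun p _ => ht0 p.1 p.2
  have hδle : ∀ j l, δ ≤ P j l := fun j l => Finset.inf'_le _ (Finset.mem_univ (j, l))
  have hKδ : (K : ℝ) * δ ≤ 1 := by
    have h1 : ∑ l : Fin K, δ ≤ ∑ l, P k l := Finset.sum_le_sum fun l _ => hδle k l
    rw [hProw k] at h1
    simpa [Finset.sum_const, Finset.card_univ, Fintype.card_fin] using h1
  -- the maximal deviation
  set D : Fin N → ℝ := fun i => ∑ l, |μ i l - πt l| with hDdef
  obtain ⟨n', hn'mem, hn'max⟩ :=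
    Finset.exists_max_image Finset.univ D ⟨n, Finset.mem_univ n⟩
  set w : Fin N → ℝ := fun i => (A ^ t0) n' i with hwdef
  have hwnn : ∀ i, 0 ≤ w i := fun i => (aux_rowstoch_pow A hAnn hArow t0).1 n' i
  have hwsum : ∑ i, w i = 1 := (aux_rowstoch_pow A hAnn hArow t0).2 n'
  have hstatP : ∀ k', ∑ j, πt j * P j k' = πt k' := by
    intro k'
    rw [hPdef]
    exact hstatT t0 k'
  have hent : ∀ k', μ n' k' = ∑ i, w i * ∑ j, μ i j * P j k' := by
    intro k'
    have h := hiter t0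
    rw [← hPdef] at h
    have h2 : M n' k' = (A ^ t0 * (M * P)) n' k' := by rw [← h]
    calc μ n' k' = (A ^ t0 * (M * P)) n' k' := h2
      _ = ∑ i, w i * ∑ j, μ i j * P j k' := by
          rw [Matrix.mul_apply]
          refine Finset.sum_congr rfl fun i _ => ?_
          rw [Matrix.mul_apply]
          rfl
  have hdiff : ∀ k', μ n' k' - πt k' = ∑ i, w i * ∑ j, (μ i j - πt j) * P j k' := by
    intro k'
    rw [hent k']
    have h2 : πt k' = ∑ i, w i * πt k' := by rw [← Finset.sum_mul, hwsum, one_mul]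
    calc ∑ i, w i * ∑ j, μ i j * P j k' - πt k'
        = ∑ i, w i * ∑ j, μ i j * P j k' - ∑ i, w i * πt k' := by rw [← h2]
      _ = ∑ i, (w i * ∑ j, μ i j * P j k' - w i * πt k') := (Finset.sum_sub_distrib _ _).symm
      _ = ∑ i, w i * ∑ j, (μ i j - πt j) * P j k' := by
          apply Finset.sum_congr rfl
          intro i _
          rw [← mul_sub]
          congr 1
          simp_rw [sub_mul]
          rw [Finset.sum_sub_distrib, hstatP k']
  have hDnn : 0 ≤ D n' := Finset.sum_nonneg fun l _ => abs_nonneg _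
  have hcontr : D n' ≤ (1 - K * δ) * D n' := by
    calc D n' = ∑ k', |∑ i, w i * ∑ j, (μ i j - πt j) * P j k'| := by
          apply Finset.sum_congr rfl
          intro k' _
          rw [hdiff k']
      _ ≤ ∑ k', ∑ i, |w i * ∑ j, (μ i j - πt j) * P j k'| :=
          Finset.sum_le_sum fun k' _ => Finset.abs_sum_le_sum_abs _ _
      _ = ∑ i, w i * ∑ k', |∑ j, (μ i j - πt j) * P j k'| := by
          rw [Finset.sum_comm]
          apply Finset.sum_congr rfl
          intro i _
          rw [Finset.mul_sum]
          apply Finset.sum_congr rfl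
          intro k' _
          rw [abs_mul, abs_of_nonneg (hwnn i)]
      _ ≤ ∑ i, w i * ((1 - K * δ) * D i) := by
          apply Finset.sum_le_sum
          intro i _
          apply mul_le_mul_of_nonneg_left _ (hwnn i)
          have husum : ∑ j, (μ i j - πt j) = 0 := by
            rw [Finset.sum_sub_distrib, hμsum i, hπt1, sub_self]
          exact aux_doeblin P δ hδle hProw (fun j => μ i j - πt j) husum
      _ ≤ ∑ i, w i * ((1 - K * δ) * D n') := by
          apply Finset.sum_le_sum
          intro i _
          apply mul_le_mul_of_nonneg_left _ (hwnn i)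
          apply mul_le_mul_of_nonneg_left (hn'max i (Finset.mem_univ i))
          linarith [hKδ]
      _ = (1 - K * δ) * D n' := by rw [← Finset.sum_mul, hwsum, one_mul]
  have hKpos : (0:ℝ) < K := by exact_mod_cast hK
  have hDzero : D n' = 0 := by nlinarith [mul_pos hKpos hδpos]
  have habs : |μ n k - πt k| ≤ 0 := by
    have h1 : |μ n k - πt k| ≤ D n := by
      rw [hDdef]
      exact Finset.single_le_sum (f := fun l => |μ n l - πt l|)
        (fun l _ => abs_nonneg _) (Finset.mem_univ k)
    calc |μ n k - πt k| ≤ D n := h1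
      _ ≤ D n' := hn'max n (Finset.mem_univ n)
      _ = 0 := hDzero
  have h0 : μ n k - πt k = 0 := abs_eq_zero.mp (le_antisymm habs (abs_nonneg _))
  linarith
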